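/- arXiv:1802.04950 — 7 statements merged into one kernel-verified Lean document; each statement's English description precedes it below -/
import Mathlib

section
/- Let A ∈ 𝒫^a_ℝ, B ∈ 𝒫^b_ℝ, C ∈ 𝒫^c_ℝ (real polynomials in the sense q_i = conj(q_{k-i})), and suppose (X, Y) is a pair of complex polynomials with A·X − B·Y = C and deg X ≤ c − a. Then there exists a solution (X₀, Y₀) to A·X₀ − B·Y₀ = C with X₀ ∈ 𝒫^{c−a}_ℝ and Y₀ ∈ 𝒫^{c−b}_ℝ. -/
open Polynomial

/-- `PR k q` : `q` is a "real" polynomial of degree at most `k`,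
meaning `q_i = conj q_{k-i}` for all `0 ≤ i ≤ k`. -/
def PR (k : ℕ) (q : Polynomial ℂ) : Prop :=
  q.degree ≤ (k : ℕ) ∧ ∀ i ≤ k, q.coeff i = (starRingEnd ℂ) (q.coeff (k - i))

/-- Conjugate-reverse involution on polynomials of degree at most `k`. -/
noncomputable def rho (k : ℕ) (q : Polynomial ℂ) : Polynomial ℂ :=
  (q.reflect k).map (starRingEnd ℂ)

lemma coeff_rho (k : ℕ) (q : Polynomial ℂ) (i : ℕ) :
    (rho k q).coeff i = (starRingEnd ℂ) (q.coeff (revAt k i)) := by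
  simp [rho, coeff_map, coeff_reflect]

lemma rho_rho (k : ℕ) (q : Polynomial ℂ) : rho k (rho k q) = q := by
  ext i
  simp [coeff_rho, revAt_invol]

lemma rho_sub (k : ℕ) (p q : Polynomial ℂ) : rho k (p - q) = rho k p - rho k q := by
  ext i; simp [coeff_rho]

lemma rho_add (k : ℕ) (p q : Polynomial ℂ) : rho k (p + q) = rho k p + rho k q := by
  ext i; simp [coeff_rho]

lemma rho_C_mul (k : ℕ) (z : ℂ) (p : Polynomial ℂ) :
    rho k (Polynomial.C z * p) = Polynomial.C ((starRingEnd ℂ) z) * rho k p := by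
  ext i; simp [coeff_rho, coeff_C_mul]

lemma rho_degree_le (k : ℕ) (q : Polynomial ℂ) (hq : q.degree ≤ (k : ℕ)) :
    (rho k q).degree ≤ (k : ℕ) := by
  rw [degree_le_iff_coeff_zero] at hq ⊢
  intro m hm
  have hmk : k < m := by exact_mod_cast hm
  rw [coeff_rho, revAt_eq_self_of_lt hmk, hq m hm, map_zero]

lemma rho_mul (m n : ℕ) (p q : Polynomial ℂ) (hp : p.natDegree ≤ m) (hq : q.natDegree ≤ n) :
    rho (m + n) (p * q) = rho m p * rho n q := by
  rw [rho, rho, rho, reflect_mul p q hp hq, Polynomial.map_mul]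

lemma PR_iff (k : ℕ) (q : Polynomial ℂ) :
    PR k q ↔ q.degree ≤ (k : ℕ) ∧ rho k q = q := by
  constructor
  · rintro ⟨hd, hc⟩
    refine ⟨hd, ?_⟩
    ext i
    rcases le_or_gt i k with h | h
    · rw [coeff_rho, revAt_le h, ← hc i h]
    · simp [coeff_rho, revAt_eq_self_of_lt h,
        (degree_le_iff_coeff_zero _ _).1 hd i (by exact_mod_cast h)]
  · rintro ⟨hd, hr⟩
    refine ⟨hd, fun i hi => ?_⟩
    conv_lhs => rw [← hr]
    rw [coeff_rho, revAt_le hi]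

/-- if `A ∈ 𝒫^a_ℝ`, `B ∈ 𝒫^b_ℝ`, `C ∈ 𝒫^c_ℝ` and `(X, Y)` solves
`A X − B Y = C` with `deg X ≤ c − a`, then there is a real solution
`(X₀, Y₀) ∈ 𝒫^{c−a}_ℝ × 𝒫^{c−b}_ℝ`. -/
theorem bezout_real_solution (a b c : ℕ) (hac : a ≤ c) (hbc : b ≤ c)
    (A B Cc X Y : Polynomial ℂ)
    (hA : PR a A) (hAdeg : A.natDegree = a) (hA0 : A ≠ 0)
    (hB : PR b B) (hBdeg : B.natDegree = b) (hB0 : B ≠ 0)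
    (hC : PR c Cc)
    (heq : A * X - B * Y = Cc) (hX : X.degree ≤ ((c - a : ℕ) : ℕ)) :
    ∃ X₀ Y₀ : Polynomial ℂ,
      A * X₀ - B * Y₀ = Cc ∧ PR (c - a) X₀ ∧ PR (c - b) Y₀ := by
  obtain ⟨hAdeg', hAfix⟩ := (PR_iff a A).1 hA
  obtain ⟨hBdeg', hBfix⟩ := (PR_iff b B).1 hB
  obtain ⟨hCdeg', hCfix⟩ := (PR_iff c Cc).1 hC
  have hXnat : X.natDegree ≤ c - a := natDegree_le_iff_degree_le.2 hX
  -- degree of Y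
  have hBY : (B * Y).degree ≤ (c : ℕ) := by
    have hBYeq : B * Y = A * X - Cc := by rw [← heq]; ring
    rw [hBYeq]
    refine le_trans (degree_sub_le _ _) (max_le ?_ hCdeg')
    refine le_trans (degree_mul_le _ _) ?_
    calc A.degree + X.degree ≤ (a : WithBot ℕ) + ((c - a : ℕ) : WithBot ℕ) :=
          add_le_add hAdeg' hX
      _ = ((a + (c - a) : ℕ) : WithBot ℕ) := by exact_mod_cast (Nat.cast_add _ _).symm
      _ = (c : ℕ) := by congr 1; omega
  have hYnat : Y.natDegree ≤ c - b := by
    by_cases hY0 : Y = 0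
    · simp [hY0]
    · have h1 : (B * Y).natDegree ≤ c := natDegree_le_iff_degree_le.2 hBY
      rw [natDegree_mul hB0 hY0, hBdeg] at h1
      omega
  have hY : Y.degree ≤ ((c - b : ℕ) : ℕ) := degree_le_of_natDegree_le hYnat
  -- the conjugated pair is also a solution
  have key : A * rho (c - a) X - B * rho (c - b) Y = Cc := by
    have h1 : rho c (A * X) = A * rho (c - a) X := by
      have := rho_mul a (c - a) A X (by omega) hXnat
      rw [show a + (c - a) = c by omega] at this
      rw [this, hAfix]
    have h2 : rho c (B * Y) = B * rho (c - b) Y := by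
      have := rho_mul b (c - b) B Y (by omega) hYnat
      rw [show b + (c - b) = c by omega] at this
      rw [this, hBfix]
    rw [← h1, ← h2, ← rho_sub, heq, hCfix]
  refine ⟨Polynomial.C (1/2 : ℂ) * (X + rho (c - a) X),
          Polynomial.C (1/2 : ℂ) * (Y + rho (c - b) Y), ?_, ?_, ?_⟩
  · have : A * (Polynomial.C (1/2 : ℂ) * (X + rho (c - a) X)) -
        B * (Polynomial.C (1/2 : ℂ) * (Y + rho (c - b) Y)) =
        Polynomial.C (1/2 : ℂ) * ((A * X - B * Y) + (A * rho (c - a) X - B * rho (c - b) Y)) := by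
      ring
    rw [this, heq, key, ← two_mul, ← mul_assoc,
      (map_ofNat Polynomial.C 2).symm, ← Polynomial.C_mul]
    norm_num
  · rw [PR_iff]
    constructor
    · refine le_trans (degree_mul_le _ _) ?_
      refine le_trans (add_le_add degree_C_le (degree_add_le _ _)) ?_
      simp [hX, rho_degree_le _ _ hX]
    · rw [rho_C_mul, rho_add, rho_rho]
      have : (starRingEnd ℂ) (1/2 : ℂ) = (1/2 : ℂ) := by
        rw [map_div₀, map_one, map_ofNat]
      rw [this]
      ring
  · rw [PR_iff]
    constructor
    · refine le_trans (degree_mul_le _ _) ?_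
      refine le_trans (add_le_add degree_C_le (degree_add_le _ _)) ?_
      simp [hY, rho_degree_le _ _ hY]
    · rw [rho_C_mul, rho_add, rho_rho]
      have : (starRingEnd ℂ) (1/2 : ℂ) = (1/2 : ℂ) := by
        rw [map_div₀, map_one, map_ofNat]
      rw [this]
      ring
end

section
/- Let P be a polynomial over ℂ with only simple roots, all nonzero, of degree m ≥ g + 4 where g ≥ 4. If a polynomial c of degree at most g + 3 satisfies 0 = 2P(ζ)(c(ζ) − ζ c'(ζ)) + P'(ζ) ζ c(ζ) for all ζ, then c = 0. -/
open Polynomial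

/-- if `P` is squarefree of degree `m ≥ g + 4` (with `g ≥ 4`), has no root
at `0`, and a polynomial `c` of degree at most `g + 3` satisfies
`0 = 2P(c − ζ c') + P' ζ c`, then `c = 0`. -/
theorem deformation_polynomial_vanishes (g m : ℕ) (hg : 4 ≤ g) (hm : g + 4 ≤ m)
    (P c : Polynomial ℂ) (hP : Squarefree P) (hP0 : P.eval 0 ≠ 0)
    (hPdeg : P.natDegree = m) (hc : c.degree ≤ ((g + 3 : ℕ) : ℕ))
    (heq : 0 = 2 * P * (c - X * derivative c) + derivative P * X * c) :
    c = 0 := by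
  have hPne : P ≠ 0 := hP.ne_zero
  -- P divides P' * X * c
  have hdvd : P ∣ derivative P * X * c := by
    refine ⟨-(2 * (c - X * derivative c)), ?_⟩
    linear_combination -heq
  have hcopP' : IsCoprime P (derivative P) := by
    have hsep : P.Separable := PerfectField.separable_iff_squarefree.mpr hP
    exact hsep
  have hcopX : IsCoprime P X := by
    have : ¬ X ∣ P := by
      intro h
      exact hP0 (by simpa [Polynomial.coeff_zero_eq_eval_zero] using (Polynomial.X_dvd_iff).mp h)
    exact ((Polynomial.irreducible_X.coprime_iff_not_dvd).mpr this).symm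
  have hPc : P ∣ c :=
    (hcopP'.mul_right hcopX).dvd_of_dvd_mul_right (by rwa [mul_comm] at hdvd)
  by_contra hc0
  have hdeg := Polynomial.natDegree_le_of_dvd hPc hc0
  have hcdeg : c.natDegree ≤ g + 3 := Polynomial.natDegree_le_iff_degree_le.mpr hc
  omega
end

section
/- Let L be a squarefree complex polynomial. If a complex polynomial c satisfies 0 = 2·ζ·L(ζ)·(c(ζ) − ζ c'(ζ)) + (ζ L(ζ))'·ζ·c(ζ) for all ζ (i.e. the equation with P = ζ·L) and deg c < 2·deg L, then c = 0. -/
open Polynomial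

private lemma coprime_XD (M : Polynomial ℂ) (hM : Squarefree M) (h0 : M.eval 0 ≠ 0) :
    IsCoprime M (X * derivative M) := by
  have hX : IsCoprime M (X : Polynomial ℂ) := by
    rw [isCoprime_comm, (irreducible_X (R := ℂ)).coprime_iff_not_dvd]
    rw [X_dvd_iff]
    simpa [coeff_zero_eq_eval_zero] using h0
  have hD : IsCoprime M (derivative M) := PerfectField.separable_iff_squarefree.mpr hM
  exact hX.mul_right hD

private lemma dvd_step (M c q : Polynomial ℂ) (hM : Squarefree M) (h0 : M.eval 0 ≠ 0)
    (h : M * q = X * derivative M * c) : M ∣ c :=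
  (coprime_XD M hM h0).dvd_of_dvd_mul_left ⟨q, h.symm⟩

/-- for `L` squarefree and `P = ζ L`, if a polynomial `c` satisfies
`0 = 2P(c − ζ c') + P' ζ c` and `deg c < 2 deg L`, then `c = 0`. -/
theorem deformation_polynomial_vanishes_branched (L c : Polynomial ℂ) (hL : Squarefree L)
    (heq : 0 = 2 * (X * L) * (c - X * derivative c) + derivative (X * L) * X * c)
    (hdeg : c.natDegree < 2 * L.natDegree) :
    c = 0 := by
  have hLne : L ≠ 0 := hL.ne_zero
  have hXne : (X : Polynomial ℂ) ≠ 0 := X_ne_zero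
  -- reduce the equation: 3 L c + X L' c - 2 X L c' = 0
  have E0 : 3 * L * c + X * derivative L * c - 2 * X * L * derivative c = 0 := by
    have h1 : X * (3 * L * c + X * derivative L * c - 2 * X * L * derivative c) = X * 0 := by
      rw [mul_zero]
      have := heq.symm
      rw [derivative_mul, derivative_X] at this
      ring_nf
      ring_nf at this
      linear_combination this
    exact mul_left_cancel₀ hXne h1
  have hLL : L * L ∣ c := by
    by_cases hXL : (X : Polynomial ℂ) ∣ L
    · -- L = X * M
      obtain ⟨M, rfl⟩ := hXL
      have hMsf : Squarefree M := hL.squarefree_of_dvd ⟨X, mul_comm X M⟩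
      have hMne : M ≠ 0 := hMsf.ne_zero
      have hM0 : M.eval 0 ≠ 0 := by
        intro h
        have : (X : Polynomial ℂ) ∣ M := by
          rw [X_dvd_iff, coeff_zero_eq_eval_zero]; exact h
        obtain ⟨N, rfl⟩ := this
        exact Polynomial.not_isUnit_X (hL X ⟨N, by ring⟩)
      -- E2 : M * (4c - 2Xc') = -(X M' c)
      have E2 : M * (4 * c - 2 * X * derivative c) = X * derivative M * (-c) := by
        have h1 : X * (M * (4 * c - 2 * X * derivative c)) =
            X * (X * derivative M * (-c)) := by
          have := E0
          rw [derivative_mul, derivative_X] at this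
          ring_nf
          ring_nf at this
          linear_combination this
        exact mul_left_cancel₀ hXne h1
      have hMc : M ∣ c := dvd_neg.mp (dvd_step M (-c) _ hMsf hM0 E2)
      have hXc : (X : Polynomial ℂ) ∣ c := by
        rw [X_dvd_iff, coeff_zero_eq_eval_zero]
        have := congrArg (eval 0) E2
        simp at this
        rcases this with h | h
        · exact absurd h hM0
        · exact h
      have hXM : IsCoprime (X : Polynomial ℂ) M := by
        rw [(irreducible_X (R := ℂ)).coprime_iff_not_dvd, X_dvd_iff,
          coeff_zero_eq_eval_zero]
        exact hM0
      obtain ⟨d, rfl⟩ := hXM.mul_dvd hXc hMc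
      -- now derive M * (2d - 2Xd') = X M' d, so M ∣ d, and d(0)=0 so X ∣ d
      have E3 : M * (2 * d - 2 * X * derivative d) = X * derivative M * d := by
        have h1 : (X * M) * (M * (2 * d - 2 * X * derivative d)) =
            (X * M) * (X * derivative M * d) := by
          have := E2
          rw [show derivative (X * M * d) =
              M * d + X * derivative M * d + X * M * derivative d by
            rw [derivative_mul, derivative_mul, derivative_X]; ring] at this
          ring_nf
          ring_nf at this
          linear_combination this
        exact mul_left_cancel₀ (mul_ne_zero hXne hMne) h1
      have hMd : M ∣ d := dvd_step M d _ hMsf hM0 E3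
      have hXd : (X : Polynomial ℂ) ∣ d := by
        rw [X_dvd_iff, coeff_zero_eq_eval_zero]
        have := congrArg (eval 0) E3
        simp at this
        rcases this with h | h
        · exact absurd h hM0
        · exact h
      obtain ⟨e, rfl⟩ := hXM.mul_dvd hXd hMd
      exact ⟨e, by ring⟩
    · have hL0 : L.eval 0 ≠ 0 := by
        intro h
        exact hXL (by rw [X_dvd_iff, coeff_zero_eq_eval_zero]; exact h)
      have E1 : L * (3 * c - 2 * X * derivative c) = X * derivative L * (-c) := by
        linear_combination E0
      have hLc : L ∣ c := dvd_neg.mp (dvd_step L (-c) _ hL hL0 E1)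
      obtain ⟨d, rfl⟩ := hLc
      have E3 : L * (3 * d - 2 * X * derivative d) = X * derivative L * d := by
        have h1 : L * (L * (3 * d - 2 * X * derivative d)) =
            L * (X * derivative L * d) := by
          have := E1
          rw [show derivative (L * d) = derivative L * d + L * derivative d from
            derivative_mul] at this
          ring_nf
          ring_nf at this
          linear_combination this
        exact mul_left_cancel₀ hLne h1
      have hLd : L ∣ d := dvd_step L d _ hL hL0 E3
      obtain ⟨e, rfl⟩ := hLd
      exact ⟨e, by ring⟩
  by_contra hc
  have h1 : (L * L).natDegree ≤ c.natDegree := natDegree_le_of_dvd hLL hc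
  rw [natDegree_mul hLne hLne] at h1
  omega
end

section
/- Let L be a nonzero complex polynomial of degree 2 with simple roots, both nonzero, and let P = ζ·L (so g = 1 in the family P of degree 2g+2 with a root at 0). If c = a·L² for a constant a ∈ ℂ and 0 = 2P(c − ζ c') + P' ζ c, then a = 0. -/
open Polynomial

/-- for `L` squarefree quadratic with `L(0) ≠ 0` and `P = ζ L` (the genus
one, conformal case), if `c = a L²` satisfies `0 = 2P(c − ζ c') + P' ζ c`, then `a = 0`. -/
theorem deformation_polynomial_vanishes_genus_one (L : Polynomial ℂ) (a : ℂ)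
    (hL : Squarefree L) (hLdeg : L.natDegree = 2) (hL0 : L.eval 0 ≠ 0)
    (heq : 0 = 2 * (X * L) * (C a * L ^ 2 - X * derivative (C a * L ^ 2)) +
        derivative (X * L) * X * (C a * L ^ 2)) :
    a = 0 := by
  have hd1 : derivative (C a * L ^ 2) = C a * (2 * L * derivative L) := by
    rw [derivative_C_mul, derivative_sq, map_ofNat]
  have hd2 : derivative (X * L) = L + X * derivative L := by
    simp [derivative_mul]
  rw [hd1, hd2] at heq
  have key : C a * (3 * X * L ^ 2 * (L - X * derivative L)) = 0 := by
    linear_combination -heq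
  have hX : (X : Polynomial ℂ) ≠ 0 := X_ne_zero
  have hLne : L ≠ 0 := by
    intro h; simp [h] at hLdeg
  have hfac : L - X * derivative L ≠ 0 := by
    intro h
    have := congrArg (eval 0) h
    simp at this
    exact hL0 this
  have h3 : (3 : Polynomial ℂ) ≠ 0 := by norm_num
  have hC : C a = 0 :=
    (mul_eq_zero.mp key).resolve_right
      (mul_ne_zero (mul_ne_zero (mul_ne_zero h3 hX) (pow_ne_zero 2 hLne)) hfac)
  exact_mod_cast (C_eq_zero.mp hC)
end

section
/- Let α ∈ ℂ with 0 < |α| < 1, set x = −(1 + α·conj(α))/(2α), and for nonzero y ∈ ℂ define the cubic b_y(ζ) = y + x y ζ + conj(x y) ζ² + conj(y) ζ³. If b_y and b_w (for nonzero y, w) share a common root β with 1 + xβ ≠ 0, then y/conj(y) = w/conj(w); consequently b_y and b_w are real-linearly dependent: w = λ y for some λ ∈ ℝ, or w = μ·y with b_w a real scalar multiple of b_y after the identification. Precisely: b_y(β) = 0 implies y/conj(y) = −β²(conj(x) + β)/(1 + xβ), so the ratio y/conj(y) is determined by β, and two such cubics with a common root β are proportional over ℝ. -/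
/-- genus-zero differentials with a common root are ℝ-linearly dependent.
With `0 < |α| < 1`, `x = −(1 + α conj α)/(2α)`, and `b_y(ζ) = y + x y ζ + conj(x y) ζ² +
conj(y) ζ³` for `y ≠ 0`: if `b_y(β) = 0` and `1 + x β ≠ 0` then
`y/conj y = −β² (conj x + β)/(1 + x β)`; consequently if also `b_w(β) = 0` for `w ≠ 0`
then `w = λ y` for some real `λ`. -/
theorem genus_zero_common_root (α : ℂ) (hα0 : 0 < ‖α‖)
    (hα1 : ‖α‖ < 1) (y w β : ℂ) (hy : y ≠ 0) (hw : w ≠ 0)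
    (x : ℂ) (hx : x = -(1 + α * (starRingEnd ℂ) α) / (2 * α))
    (hβ : 1 + x * β ≠ 0)
    (hyroot : y + x * y * β + (starRingEnd ℂ) (x * y) * β ^ 2 +
      (starRingEnd ℂ) y * β ^ 3 = 0) :
    y / (starRingEnd ℂ) y = -β ^ 2 * ((starRingEnd ℂ) x + β) / (1 + x * β) ∧
    (w + x * w * β + (starRingEnd ℂ) (x * w) * β ^ 2 +
        (starRingEnd ℂ) w * β ^ 3 = 0 →
      ∃ lam : ℝ, w = (lam : ℂ) * y) := by
  have hyc : (starRingEnd ℂ) y ≠ 0 := by simpa using hy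
  have hwc : (starRingEnd ℂ) w ≠ 0 := by simpa using hw
  have key : ∀ z : ℂ, z ≠ 0 →
      z + x * z * β + (starRingEnd ℂ) (x * z) * β ^ 2 +
        (starRingEnd ℂ) z * β ^ 3 = 0 →
      z / (starRingEnd ℂ) z = -β ^ 2 * ((starRingEnd ℂ) x + β) / (1 + x * β) := by
    intro z hz hroot
    have hzc : (starRingEnd ℂ) z ≠ 0 := by simpa using hz
    rw [div_eq_div_iff hzc hβ]
    rw [map_mul] at hroot
    ring_nf
    ring_nf at hroot
    linear_combination hroot
  refine ⟨key y hy hyroot, fun hwroot => ?_⟩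
  have h1 := key y hy hyroot
  have h2 := key w hw hwroot
  have h3 : y / (starRingEnd ℂ) y = w / (starRingEnd ℂ) w := h1.trans h2.symm
  have h4 : y * (starRingEnd ℂ) w = w * (starRingEnd ℂ) y := by
    field_simp at h3
    linear_combination h3
  have hreal : (starRingEnd ℂ) (w / y) = w / y := by
    rw [map_div₀]
    field_simp
    linear_combination h4
  obtain ⟨lam, hlam⟩ := Complex.conj_eq_iff_real.mp hreal
  exact ⟨lam, by field_simp at hlam; linear_combination hlam⟩
end

section
/- Let P, b¹, b², Ṗ, ḃ¹, ḃ², ĉ¹, ĉ² be polynomials over ℂ with P₀ = P(0) ≠ 0, satisfying for i = 1,2: (i) the coefficient identities from degrees 0 and 1 of Ṗ bⁱ − 2P ḃⁱ = 2P(ĉⁱ − ζ(ĉⁱ)') + P' ζ ĉⁱ, (ii) the residue condition P₁ b⁰ⁱ − 2P₀ b₁ⁱ = 0 (subscripts denoting coefficients), and (iii) b¹ĉ² − b²ĉ¹ = Q̂ P for some polynomial Q̂. Then the derivative residue condition Ṗ₁ b₀ⁱ + P₁ ḃ₀ⁱ − 2Ṗ₀ b₁ⁱ − 2P₀ ḃ₁ⁱ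 = 0 holds automatically for i = 1, 2. -/
open Polynomial

private lemma key_scalar (p0 p1 pd0 pd1 b0 b1' bd0 bd1 c0 : ℂ)
    (hp0 : p0 ≠ 0)
    (e0 : pd0 * b0 - 2 * p0 * bd0 = 2 * p0 * c0)
    (e1 : pd0 * b1' + pd1 * b0 - 2 * p0 * bd1 - 2 * p1 * bd0 = 3 * p1 * c0)
    (res : p1 * b0 - 2 * p0 * b1' = 0) :
    pd1 * b0 + p1 * bd0 - 2 * pd0 * b1' - 2 * p0 * bd1 = 0 := by
  by_cases hb0 : b0 = 0
  · have hb1 : b1' = 0 := by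
      have h2 : (2 : ℂ) * p0 ≠ 0 := by simpa using hp0
      have h3 : (2 * p0) * b1' = 0 := by rw [hb0] at res; linear_combination -res
      rcases mul_eq_zero.mp h3 with h | h
      · exact absurd h h2
      · exact h
    subst hb0; subst hb1
    have h2 : (2 * p0) * (pd1 * 0 + p1 * bd0 - 2 * pd0 * 0 - 2 * p0 * bd1) = (2 * p0) * 0 := by
      linear_combination 2 * p0 * e1 - 3 * p1 * e0
    exact mul_left_cancel₀ (by simpa using hp0) h2
  · apply mul_left_cancel₀ hb0 (b := _) (c := 0)
    linear_combination b0 * e1 + 3 * (c0 + bd0) * res - 3 * b1' * e0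

/-- in the nonconformal case (`P₀ ≠ 0`), the differentiated residue
condition `Ṗ₁ b₀ⁱ + P₁ ḃ₀ⁱ − 2Ṗ₀ b₁ⁱ − 2P₀ ḃ₁ⁱ = 0` holds automatically, given the
degree-0 and degree-1 coefficient identities of the deformation equations
`Ṗ bⁱ − 2P ḃⁱ = 2P(ĉⁱ − ζ (ĉⁱ)') + P' ζ ĉⁱ`, the residue conditions
`P₁ b₀ⁱ − 2P₀ b₁ⁱ = 0`, and `b¹ ĉ² − b² ĉ¹ = Q̂ P`. -/
theorem residue_condition_automatic (P Pd b1 b2 bd1 bd2 c1 c2 Qh : Polynomial ℂ)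
    (hP0 : P.coeff 0 ≠ 0)
    (heq0_1 : (Pd * b1 - 2 * P * bd1).coeff 0 =
      (2 * P * (c1 - X * derivative c1) + derivative P * X * c1).coeff 0)
    (heq1_1 : (Pd * b1 - 2 * P * bd1).coeff 1 =
      (2 * P * (c1 - X * derivative c1) + derivative P * X * c1).coeff 1)
    (heq0_2 : (Pd * b2 - 2 * P * bd2).coeff 0 =
      (2 * P * (c2 - X * derivative c2) + derivative P * X * c2).coeff 0)
    (heq1_2 : (Pd * b2 - 2 * P * bd2).coeff 1 =
      (2 * P * (c2 - X * derivative c2) + derivative P * X * c2).coeff 1)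
    (hres1 : P.coeff 1 * b1.coeff 0 - 2 * P.coeff 0 * b1.coeff 1 = 0)
    (hres2 : P.coeff 1 * b2.coeff 0 - 2 * P.coeff 0 * b2.coeff 1 = 0)
    (hQ : b1 * c2 - b2 * c1 = Qh * P) :
    (Pd.coeff 1 * b1.coeff 0 + P.coeff 1 * bd1.coeff 0
        - 2 * Pd.coeff 0 * b1.coeff 1 - 2 * P.coeff 0 * bd1.coeff 1 = 0) ∧
    (Pd.coeff 1 * b2.coeff 0 + P.coeff 1 * bd2.coeff 0
        - 2 * Pd.coeff 0 * b2.coeff 1 - 2 * P.coeff 0 * bd2.coeff 1 = 0) := by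
  simp only [coeff_sub, coeff_add, coeff_mul, Finset.Nat.sum_antidiagonal_eq_sum_range_succ_mk,
    Finset.sum_range_succ, Finset.sum_range_zero, coeff_X_zero, coeff_X_one, coeff_derivative,
    coeff_ofNat_zero, coeff_ofNat_succ] at heq0_1 heq1_1 heq0_2 heq1_2
  ring_nf at heq0_1 heq1_1 heq0_2 heq1_2
  simp only [coeff_X_zero, coeff_X_one] at heq0_1 heq1_1 heq0_2 heq1_2
  constructor
  · apply key_scalar (P.coeff 0) (P.coeff 1) (Pd.coeff 0) (Pd.coeff 1) (b1.coeff 0) (b1.coeff 1)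
      (bd1.coeff 0) (bd1.coeff 1) (c1.coeff 0) hP0
    · linear_combination heq0_1
    · linear_combination heq1_1
    · exact hres1
  · apply key_scalar (P.coeff 0) (P.coeff 1) (Pd.coeff 0) (Pd.coeff 1) (b2.coeff 0) (b2.coeff 1)
      (bd2.coeff 0) (bd2.coeff 1) (c2.coeff 0) hP0
    · linear_combination heq0_2
    · linear_combination heq1_2
    · exact hres2
end

section
/- Let P, b¹, b², Ṗ, ḃ¹, ḃ², ĉ¹, ĉ², Q be complex polynomials with P(0) = 0, P₁ = P'(0) ≠ 0, and b₀¹ = b₀² = 0 (constant coefficients vanish), satisfying for i = 1,2: the degree-1 coefficient identity of Ṗ bⁱ − 2P ḃⁱ = 2P(ĉⁱ − ζ(ĉⁱ)') + P' ζ ĉⁱ, the differentiated residue condition P₁ ḃ₀ⁱ − 2 Ṗ₀ b₁ⁱ = 0, and b¹ĉ² − b²ĉ¹ = Q·P. Then Q₀·(P₁)² = 0, hence Q(0) = 0. -/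
open Polynomial

/-- in the conformal case (`P₀ = 0`, `P₁ ≠ 0`, `b₀¹ = b₀² = 0`), the
degree-1 coefficient identities of the deformation equations, the differentiated residue
conditions `P₁ ḃ₀ⁱ − 2Ṗ₀ b₁ⁱ = 0`, and `b¹ ĉ² − b² ĉ¹ = Q P` force `Q₀ (P₁)² = 0`,
hence `Q(0) = 0`. -/
theorem conformal_Q_constant_vanishes (P Pd b1 b2 bd1 bd2 c1 c2 Q : Polynomial ℂ)
    (hP0 : P.coeff 0 = 0) (hP1 : P.coeff 1 ≠ 0)
    (hb1 : b1.coeff 0 = 0) (hb2 : b2.coeff 0 = 0)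
    (heq1 : (Pd * b1 - 2 * P * bd1).coeff 1 =
      (2 * P * (c1 - X * derivative c1) + derivative P * X * c1).coeff 1)
    (heq2 : (Pd * b2 - 2 * P * bd2).coeff 1 =
      (2 * P * (c2 - X * derivative c2) + derivative P * X * c2).coeff 1)
    (hres1 : P.coeff 1 * bd1.coeff 0 - 2 * Pd.coeff 0 * b1.coeff 1 = 0)
    (hres2 : P.coeff 1 * bd2.coeff 0 - 2 * Pd.coeff 0 * b2.coeff 1 = 0)
    (hQ : b1 * c2 - b2 * c1 = Q * P) :
    Q.coeff 0 * P.coeff 1 ^ 2 = 0 ∧ Q.coeff 0 = 0 := by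
  have hanti : (Finset.HasAntidiagonal.antidiagonal 1 : Finset (ℕ×ℕ)) = {(0,1),(1,0)} := rfl
  have hQ1 := congrArg (fun p => Polynomial.coeff p 1) hQ
  simp [coeff_mul, hanti, coeff_derivative, hP0, hb1, hb2, coeff_X,
    Finset.sum_pair] at heq1 heq2 hQ1
  -- heq_i : Pd₀ b_i₁ - 2 P₁ bd_i₀ = 3 P₁ c_i₀, combined with hres_i gives P₁ c_i₀ = -Pd₀ b_i₁
  have key : Q.coeff 0 * P.coeff 1 ^ 2 = 0 := by
    have h1 : P.coeff 1 * c1.coeff 0 = - (Pd.coeff 0 * b1.coeff 1) := by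
      linear_combination (-(heq1 + 2 * hres1)) / 3
    have h2 : P.coeff 1 * c2.coeff 0 = - (Pd.coeff 0 * b2.coeff 1) := by
      linear_combination (-(heq2 + 2 * hres2)) / 3
    linear_combination -(P.coeff 1 * hQ1) + b1.coeff 1 * h2 - b2.coeff 1 * h1
  exact ⟨key, by
    have := mul_eq_zero.mp key
    rcases this with h | h
    · exact h
    · exact absurd (pow_eq_zero_iff (by norm_num) |>.mp h) hP1⟩
end
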